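/- Let λ₁ > λ₂ and β₁ < β₂ be real numbers. For θ ∈ [0, π/2), define the 2×2 symmetric matrix D(θ) = V(θ) diag(β₁,β₂) V(θ)ᵀ − diag(λ₁,λ₂), where V(θ) is rotation by θ. Then for every θ ∈ (0, π/2), λ(D(θ)) is strictly majorized by λ(D(0)); i.e., λ(D(θ)) ≺ λ(D(0)) and λ(D(θ)) ≠ λ(D(0)). -/

import Mathlib

open Finset

/-- Decreasing rearrangement of a vector in ℝⁿ. -/
noncomputable def dsort {n : ℕ} (u : Fin n → ℝ) : Fin n → ℝ :=
  u ∘ Tuple.sort (fun i => -u i)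

/-- `Maj u v` : `u` is majorized by `v`. -/
def Maj {n : ℕ} (u v : Fin n → ℝ) : Prop :=
  (∀ k : ℕ, ∑ i ∈ univ.filter (fun i : Fin n => (i : ℕ) < k), dsort u i ≤
      ∑ i ∈ univ.filter (fun i : Fin n => (i : ℕ) < k), dsort v i) ∧
  ∑ i, u i = ∑ i, v i

open Matrix

/-- Decreasingly ordered eigenvalue vector of a real symmetric matrix. -/
noncomputable def specVec {n : ℕ} {A : Matrix (Fin n) (Fin n) ℝ} (hA : A.IsHermitian) :
    Fin n → ℝ :=
  dsort hA.eigenvalues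

/-- `A` and `B` strongly commute: a common orthonormal eigenbasis realizing both
decreasingly ordered spectra simultaneously. -/
def StrongCommute {n : ℕ} {A B : Matrix (Fin n) (Fin n) ℝ}
    (hA : A.IsHermitian) (hB : B.IsHermitian) : Prop :=
  ∃ U : Matrix (Fin n) (Fin n) ℝ, U * Uᵀ = 1 ∧
    Uᵀ * A * U = Matrix.diagonal (specVec hA) ∧
    Uᵀ * B * U = Matrix.diagonal (specVec hB)

/-- Rotation matrix by angle `θ`. -/
noncomputable def rot (θ : ℝ) : Matrix (Fin 2) (Fin 2) ℝ :=
  !![Real.cos θ, -Real.sin θ; Real.sin θ, Real.cos θ]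

/-- `D(θ) = V(θ) diag(β₁,β₂) V(θ)ᵀ − diag(λ₁,λ₂)`. -/
noncomputable def Dmat (β₁ β₂ l₁ l₂ θ : ℝ) : Matrix (Fin 2) (Fin 2) ℝ :=
  rot θ * Matrix.diagonal ![β₁, β₂] * (rot θ)ᵀ - Matrix.diagonal ![l₁, l₂]

/- ### auxiliary lemmas -/

lemma trace_eq_sum_eig {m : Type*} [Fintype m] [DecidableEq m] {A : Matrix m m ℝ}
    (hA : A.IsHermitian) : A.trace = ∑ i, hA.eigenvalues i := by
  conv_lhs => rw [hA.spectral_theorem]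
  rw [Unitary.conjStarAlgAut_apply, Matrix.trace_mul_cycle]
  simp [SetLike.coe_mem, Matrix.trace_diagonal]

lemma dsort_sum {n : ℕ} (u : Fin n → ℝ) : ∑ i, dsort u i = ∑ i, u i :=
  Equiv.sum_comp (Tuple.sort (fun i => -u i)) u

lemma dsort_prod {n : ℕ} (u : Fin n → ℝ) : ∏ i, dsort u i = ∏ i, u i :=
  Equiv.prod_comp (Tuple.sort (fun i => -u i)) u

lemma dsort_anti2 (u : Fin 2 → ℝ) : dsort u 1 ≤ dsort u 0 := by
  have := Tuple.monotone_sort (fun i => -u i) (a := (0 : Fin 2)) (b := 1) (by norm_num)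
  simpa [dsort] using this

lemma dsort_of_anti2 (u : Fin 2 → ℝ) (h : u 1 ≤ u 0) : dsort u = u := by
  have hm : Monotone (fun i : Fin 2 => -u i) := by
    intro i j hij
    fin_cases i <;> fin_cases j <;> simp_all
  unfold dsort
  rw [(Tuple.sort_eq_refl_iff_monotone).2 hm]
  rfl

/-- Characterization of specVec for 2×2: ordered, sum = trace, product = det. -/
lemma specVec2 {A : Matrix (Fin 2) (Fin 2) ℝ} (hA : A.IsHermitian) :
    specVec hA 1 ≤ specVec hA 0 ∧ specVec hA 0 + specVec hA 1 = A.trace ∧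
      specVec hA 0 * specVec hA 1 = A.det := by
  refine ⟨dsort_anti2 _, ?_, ?_⟩
  · have h1 := dsort_sum hA.eigenvalues
    rw [Fin.sum_univ_two, Fin.sum_univ_two] at h1
    rw [trace_eq_sum_eig hA, Fin.sum_univ_two]
    exact h1
  · have h1 := dsort_prod hA.eigenvalues
    rw [Fin.prod_univ_two, Fin.prod_univ_two] at h1
    have hdet : A.det = ∏ i, hA.eigenvalues i := by simpa using hA.det_eq_prod_eigenvalues
    rw [hdet, Fin.prod_univ_two]
    exact h1

lemma Dmat_entries (β₁ β₂ l₁ l₂ θ : ℝ) :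
    Dmat β₁ β₂ l₁ l₂ θ =
      !![β₁ * Real.cos θ ^ 2 + β₂ * Real.sin θ ^ 2 - l₁,
         (β₁ - β₂) * Real.sin θ * Real.cos θ;
         (β₁ - β₂) * Real.sin θ * Real.cos θ,
         β₁ * Real.sin θ ^ 2 + β₂ * Real.cos θ ^ 2 - l₂] := by
  ext i j
  fin_cases i <;> fin_cases j <;>
    · simp only [Dmat, rot, Matrix.sub_apply, Matrix.mul_apply, Fin.sum_univ_two,
        Matrix.diagonal_apply, Matrix.transpose_apply, Matrix.of_apply, Matrix.cons_val',
        Matrix.cons_val_zero, Matrix.cons_val_one, Matrix.head_cons, Matrix.empty_val',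
        Matrix.cons_val_fin_one, Matrix.head_fin_const]
      norm_num
      ring


lemma key_aux (a0 a1 b0 b1 d1 d0 : ℝ) (ha : a1 ≤ a0) (hb : b1 ≤ b0)
    (hsum : a0 + a1 = b0 + b1) (hpa : a0 * a1 = d1) (hpb : b0 * b1 = d0)
    (hd : d0 < d1) : a0 < b0 := by
  have e : (b0 - b1) ^ 2 - (a0 - a1) ^ 2 = 4 * (d1 - d0) := by
    linear_combination (-(a0 + a1 + b0 + b1)) * hsum + 4 * hpa - 4 * hpb
  have h1 : (a0 - a1) ^ 2 < (b0 - b1) ^ 2 := by linarith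
  have h2 : a0 - a1 < b0 - b1 := by nlinarith
  linarith

set_option maxHeartbeats 1000000 in
theorem stmt15 (β₁ β₂ l₁ l₂ θ : ℝ) (hl : l₂ < l₁) (hb : β₁ < β₂)
    (hθ1 : 0 < θ) (hθ2 : θ < Real.pi / 2)
    (hD : (Dmat β₁ β₂ l₁ l₂ θ).IsHermitian)
    (hD0 : (Dmat β₁ β₂ l₁ l₂ 0).IsHermitian) :
    Maj (specVec hD) (specVec hD0) ∧ specVec hD ≠ specVec hD0 := by
  have hsc : Real.sin θ ^ 2 + Real.cos θ ^ 2 = 1 := Real.sin_sq_add_cos_sq θ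
  have hsinpos : 0 < Real.sin θ :=
    Real.sin_pos_of_pos_of_lt_pi hθ1 (lt_trans hθ2 (by linarith [Real.pi_pos]))
  have htr : (Dmat β₁ β₂ l₁ l₂ θ).trace = (Dmat β₁ β₂ l₁ l₂ 0).trace := by
    rw [Dmat_entries, Dmat_entries, Matrix.trace_fin_two_of, Matrix.trace_fin_two_of]
    rw [Real.cos_zero, Real.sin_zero]
    linear_combination (β₁ + β₂) * hsc
  have hdet : (Dmat β₁ β₂ l₁ l₂ 0).det < (Dmat β₁ β₂ l₁ l₂ θ).det := by
    rw [Dmat_entries, Dmat_entries, Matrix.det_fin_two_of, Matrix.det_fin_two_of]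
    rw [Real.cos_zero, Real.sin_zero]
    have hc : Real.cos θ ^ 2 = 1 - Real.sin θ ^ 2 := by linarith
    rw [hc]
    have hpos : 0 < (β₂ - β₁) * (l₁ - l₂) * Real.sin θ ^ 2 :=
      mul_pos (mul_pos (sub_pos.2 hb) (sub_pos.2 hl)) (pow_pos hsinpos 2)
    have hid : (β₁ * (1 - Real.sin θ ^ 2) + β₂ * Real.sin θ ^ 2 - l₁) *
          (β₁ * Real.sin θ ^ 2 + β₂ * (1 - Real.sin θ ^ 2) - l₂) -
          (β₁ - β₂) * Real.sin θ * Real.cos θ * ((β₁ - β₂) * Real.sin θ * Real.cos θ) -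
          ((β₁ * 1 ^ 2 + β₂ * 0 ^ 2 - l₁) * (β₁ * 0 ^ 2 + β₂ * 1 ^ 2 - l₂) -
            (β₁ - β₂) * 0 * 1 * ((β₁ - β₂) * 0 * 1)) =
          (β₂ - β₁) * (l₁ - l₂) * Real.sin θ ^ 2 := by
      linear_combination (-(β₁ - β₂) ^ 2 * Real.sin θ ^ 2) * hsc
    linarith [hid, hpos]
  obtain ⟨hu_ord, hu_sum, hu_prod⟩ := specVec2 hD
  obtain ⟨hv_ord, hv_sum, hv_prod⟩ := specVec2 hD0
  have hus : specVec hD 0 + specVec hD 1 = specVec hD0 0 + specVec hD0 1 := by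
    rw [hu_sum, hv_sum, htr]
  have key : specVec hD 0 < specVec hD0 0 :=
    key_aux _ _ _ _ _ _ hu_ord hv_ord hus hu_prod hv_prod hdet
  have hsum_eq : ∑ i, specVec hD i = ∑ i, specVec hD0 i := by
    rw [Fin.sum_univ_two, Fin.sum_univ_two]; exact hus
  have hdu : dsort (specVec hD) = specVec hD := dsort_of_anti2 _ hu_ord
  have hdv : dsort (specVec hD0) = specVec hD0 := dsort_of_anti2 _ hv_ord
  constructor
  · refine ⟨fun k => ?_, hsum_eq⟩
    rw [hdu, hdv]
    match k with
    | 0 => simp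
    | 1 =>
      have hfil : (univ.filter (fun i : Fin 2 => (i : ℕ) < 1)) = {0} := by
        ext i; fin_cases i <;> simp
      rw [hfil, Finset.sum_singleton, Finset.sum_singleton]
      exact le_of_lt key
    | (n + 2) =>
      have hfil : (univ.filter (fun i : Fin 2 => (i : ℕ) < n + 2)) = univ := by
        apply Finset.filter_true_of_mem
        intro i _
        omega
      rw [hfil]
      exact le_of_eq hsum_eq
  · intro h
    exact absurd (congrFun h 0) (ne_of_lt key)
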